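/- Let A be a strictly positive fully observed m×n matrix and define the completion operator on a scaled-out entry: with r, c the positive scaling vectors normalizing A (row and column products of r_i c_j A[i,j] equal 1), define MCA(A)[i,j] = A[i,j]. For positive diagonal rescalings u, v, define B[i,j] = u_i v_j A[i,j]. Then the predicted value for any entry computed from B's scaling vectors equals u_i v_j times the predicted value computed from A's scaling vectors; that is, r_i^{-1} c_j^{-1} transforms to u_i v_j r_i^{-1} c_j^{-1}. -/

import Mathlib

/-- Uniqueness of the completed entries `r i * c j` for positive scaling solutions. -/
lemma scaling_uniq (m n : ℕ) (A : Fin m → Fin n → ℝ) (hA : ∀ i j, 0 < A i j)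
    (r : Fin m → ℝ) (c : Fin n → ℝ) (hr : ∀ i, 0 < r i) (hc : ∀ j, 0 < c j)
    (hrow : ∀ i, ∏ j, r i * c j * A i j = 1)
    (hcol : ∀ j, ∏ i, r i * c j * A i j = 1)
    (s : Fin m → ℝ) (d : Fin n → ℝ) (hs : ∀ i, 0 < s i) (hd : ∀ j, 0 < d j)
    (hrow2 : ∀ i, ∏ j, s i * d j * A i j = 1)
    (hcol2 : ∀ j, ∏ i, s i * d j * A i j = 1) :
    ∀ i j, r i * c j = s i * d j := by
  intro i j
  set Qc := ∏ j, c j with hQc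
  set Qd := ∏ j, d j with hQd
  set Pc := ∏ i, r i with hPc
  set Ps := ∏ i, s i with hPs
  have hQcpos : 0 < Qc := Finset.prod_pos fun j _ => hc j
  have hQdpos : 0 < Qd := Finset.prod_pos fun j _ => hd j
  have hPcpos : 0 < Pc := Finset.prod_pos fun i _ => hr i
  have hPspos : 0 < Ps := Finset.prod_pos fun i _ => hs i
  have hexp : ∀ (x : Fin m → ℝ) (y : Fin n → ℝ) (i : Fin m),
      ∏ j, x i * y j * A i j = x i ^ n * (∏ j, y j) * ∏ j, A i j := by
    intro x y i
    rw [Finset.prod_mul_distrib, Finset.prod_mul_distrib, Finset.prod_const,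
      Finset.card_univ, Fintype.card_fin]
  have hexp' : ∀ (x : Fin m → ℝ) (y : Fin n → ℝ) (j : Fin n),
      ∏ i, x i * y j * A i j = (∏ i, x i) * y j ^ m * ∏ i, A i j := by
    intro x y j
    rw [Finset.prod_mul_distrib, Finset.prod_mul_distrib, Finset.prod_const,
      Finset.card_univ, Fintype.card_fin]
  have hRi : ∀ i : Fin m, (0:ℝ) < ∏ j, A i j := fun i => Finset.prod_pos fun j _ => hA i j
  have hCj : ∀ j : Fin n, (0:ℝ) < ∏ i, A i j := fun j => Finset.prod_pos fun i _ => hA i j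
  -- row equations
  have key1 : ∀ i : Fin m, r i ^ n * Qc = s i ^ n * Qd := by
    intro i
    have h1 := hrow i; have h2 := hrow2 i
    rw [hexp r c i] at h1
    rw [hexp s d i] at h2
    have := h1.trans h2.symm
    exact mul_right_cancel₀ (ne_of_gt (hRi i)) this
  have key2 : ∀ j : Fin n, Pc * c j ^ m = Ps * d j ^ m := by
    intro j
    have h1 := hcol j; have h2 := hcol2 j
    rw [hexp' r c j] at h1
    rw [hexp' s d j] at h2
    have := h1.trans h2.symm
    exact mul_right_cancel₀ (ne_of_gt (hCj j)) this
  -- global equation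
  have key3 : Pc ^ n * Qc ^ m = Ps ^ n * Qd ^ m := by
    have h1 : ∏ i : Fin m, (r i ^ n * Qc * ∏ j, A i j) = 1 := by
      rw [Finset.prod_congr rfl fun i _ => (hexp r c i).symm]
      exact Finset.prod_eq_one fun i _ => hrow i
    have h2 : ∏ i : Fin m, (s i ^ n * Qd * ∏ j, A i j) = 1 := by
      rw [Finset.prod_congr rfl fun i _ => (hexp s d i).symm]
      exact Finset.prod_eq_one fun i _ => hrow2 i
    rw [Finset.prod_mul_distrib, Finset.prod_mul_distrib, Finset.prod_const,
      Finset.card_univ, Fintype.card_fin, Finset.prod_pow] at h1 h2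
    have := h1.trans h2.symm
    exact mul_right_cancel₀ (ne_of_gt (Finset.prod_pos fun i _ => hRi i)) this
  -- combine
  have hm : m ≠ 0 := (Fin.pos i).ne'
  have hn : n ≠ 0 := (Fin.pos j).ne'
  have hpow : (r i * c j) ^ (n * m) * (Qc ^ m * Pc ^ n)
      = (s i * d j) ^ (n * m) * (Qd ^ m * Ps ^ n) := by
    have e1 : (r i ^ n * Qc) ^ m = (s i ^ n * Qd) ^ m := by rw [key1 i]
    have e2 : (Pc * c j ^ m) ^ n = (Ps * d j ^ m) ^ n := by rw [key2 j]
    have := congrArg₂ (· * ·) e1 e2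
    calc (r i * c j) ^ (n * m) * (Qc ^ m * Pc ^ n)
        = (r i ^ n * Qc) ^ m * (Pc * c j ^ m) ^ n := by ring
      _ = (s i ^ n * Qd) ^ m * (Ps * d j ^ m) ^ n := this
      _ = (s i * d j) ^ (n * m) * (Qd ^ m * Ps ^ n) := by ring
  have hfac : (0:ℝ) < Qd ^ m * Ps ^ n := by positivity
  have : (r i * c j) ^ (n * m) = (s i * d j) ^ (n * m) := by
    have key3' : Qc ^ m * Pc ^ n = Qd ^ m * Ps ^ n := by linear_combination key3
    rw [key3'] at hpow
    exact mul_right_cancel₀ (ne_of_gt hfac) hpow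
  have hnm : n * m ≠ 0 := by simp [hm, hn]
  exact (pow_left_inj₀ (mul_pos (hr i) (hc j)).le (mul_pos (hs i) (hd j)).le hnm).mp this

/-- Unit consistency of matrix completion (2D): rescaling the data by units `u, v`
rescales every completed entry `r_i⁻¹ c_j⁻¹` by exactly `u_i v_j`. -/
theorem stmt_7 (m n : ℕ) (A : Fin m → Fin n → ℝ) (hA : ∀ i j, 0 < A i j)
    (u : Fin m → ℝ) (v : Fin n → ℝ) (hu : ∀ i, 0 < u i) (hv : ∀ j, 0 < v j)
    (r : Fin m → ℝ) (c : Fin n → ℝ) (hr : ∀ i, 0 < r i) (hc : ∀ j, 0 < c j)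
    (hrow : ∀ i, ∏ j, r i * c j * A i j = 1)
    (hcol : ∀ j, ∏ i, r i * c j * A i j = 1)
    (r' : Fin m → ℝ) (c' : Fin n → ℝ) (hr' : ∀ i, 0 < r' i) (hc' : ∀ j, 0 < c' j)
    (hrow' : ∀ i, ∏ j, r' i * c' j * (u i * v j * A i j) = 1)
    (hcol' : ∀ j, ∏ i, r' i * c' j * (u i * v j * A i j) = 1) :
    ∀ i j, (r' i)⁻¹ * (c' j)⁻¹ = u i * v j * ((r i)⁻¹ * (c j)⁻¹) := by
  intro i j
  have hs : ∀ i, 0 < r' i * u i := fun i => mul_pos (hr' i) (hu i)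
  have hd : ∀ j, 0 < c' j * v j := fun j => mul_pos (hc' j) (hv j)
  have hrow2 : ∀ i, ∏ j, (r' i * u i) * (c' j * v j) * A i j = 1 := by
    intro i; rw [← hrow' i]; exact Finset.prod_congr rfl fun j _ => by ring
  have hcol2 : ∀ j, ∏ i, (r' i * u i) * (c' j * v j) * A i j = 1 := by
    intro j; rw [← hcol' j]; exact Finset.prod_congr rfl fun i _ => by ring
  have key := scaling_uniq m n A hA r c hr hc hrow hcol
    (fun i => r' i * u i) (fun j => c' j * v j) hs hd hrow2 hcol2 i j
  have h1 := (hr i).ne'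
  have h2 := (hc j).ne'
  have h3 := (hr' i).ne'
  have h4 := (hc' j).ne'
  field_simp
  nlinarith [key, mul_pos (hu i) (hv j)]
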